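/- Let η be a probability measure on X and M: X × [0,1] → ℝ be such that for each x, r ↦ M(x,r) is monotone nondecreasing, right-continuous with M(x,0) = 0, and M(·,1) ∈ L²(η). Let G = {M(·,r) : r ∈ [0,1]}. Then for every ε with 0 < ε < 4√2·‖M(·,1)‖_{L²(η)}, the class G can be covered by at most ⌊32‖M(·,1)‖²_{L²(η)}/ε²⌋ brackets of L²(η)-length less than ε; in particular the bracketing numbers N_{[]}(ε, G, L²(η)) grow at most polynomially in 1/ε. -/

import Mathlib

open MeasureTheory Real Filter Topology

/-- For a class `G = {M(·,r) : r ∈ [0,1]}` generated by a function monotone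
and right-continuous in `r` with `M(·,0) = 0` and square-integrable envelope `M(·,1)`,
for every `0 < ε < 4√2·‖M(·,1)‖_{L²(η)}` the class can be covered by at most
`⌊32‖M(·,1)‖²/ε²⌋` brackets of `L²(η)`-length less than `ε`. -/
theorem bracketing_numbers_monotone_class
    {X : Type*} [MeasurableSpace X]
    (η : Measure X) [IsProbabilityMeasure η]
    (M : X → ℝ → ℝ)
    (hM_meas : ∀ r, Measurable (fun x => M x r))
    (hM_mono : ∀ x, MonotoneOn (M x) (Set.Icc (0 : ℝ) 1))
    (hM_rc : ∀ x, ∀ r ∈ Set.Ico (0 : ℝ) 1, ContinuousWithinAt (M x) (Set.Ici r) r)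
    (hM_zero : ∀ x, M x 0 = 0)
    (hM_env : MemLp (fun x => M x 1) 2 η)
    (N : ℝ) (hN : N = (∫ x, (M x 1) ^ 2 ∂η) ^ (1 / 2 : ℝ)) :
    ∀ ε : ℝ, 0 < ε → ε < 4 * Real.sqrt 2 * N →
      ∃ K : ℕ, K ≤ Nat.floor (32 * N ^ 2 / ε ^ 2) ∧
        ∃ lo up : Fin K → X → ℝ,
          (∀ i, (∫ x, (up i x - lo i x) ^ 2 ∂η) ^ (1 / 2 : ℝ) < ε) ∧
          (∀ r ∈ Set.Icc (0 : ℝ) 1, ∃ i,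
            (∀ x, lo i x ≤ M x r) ∧ (∀ x, M x r ≤ up i x)) := by
  classical
  intro ε hε hεN
  have hI0 : 0 ≤ ∫ x, (M x 1) ^ 2 ∂η := integral_nonneg fun x => sq_nonneg _
  have hN0 : 0 ≤ N := by rw [hN]; positivity
  have hNsq : N ^ 2 = ∫ x, (M x 1) ^ 2 ∂η := by
    rw [hN, ← Real.rpow_natCast ((∫ x, (M x 1) ^ 2 ∂η) ^ (1 / 2 : ℝ)) 2,
      ← Real.rpow_mul hI0]
    norm_num
  have hε2 : ε ^ 2 < 32 * N ^ 2 := by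
    have h2 : ε ^ 2 < (4 * Real.sqrt 2 * N) ^ 2 := by
      apply pow_lt_pow_left₀ hεN hε.le (by norm_num)
    have h3 : Real.sqrt 2 ^ 2 = 2 := Real.sq_sqrt (by norm_num)
    nlinarith [h2, h3]
  have hNpos : 0 < N := by nlinarith
  have env_nn : ∀ x, 0 ≤ M x 1 := by
    intro x
    have := hM_mono x (Set.mem_Icc.mpr ⟨le_refl 0, zero_le_one⟩)
      (Set.mem_Icc.mpr ⟨zero_le_one, le_refl 1⟩) zero_le_one
    rwa [hM_zero x] at this
  have hM_nn : ∀ x, ∀ r ∈ Set.Icc (0:ℝ) 1, 0 ≤ M x r := by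
    intro x r hr
    have := hM_mono x (Set.mem_Icc.mpr ⟨le_refl 0, zero_le_one⟩) hr hr.1
    rwa [hM_zero x] at this
  have hM_le : ∀ x, ∀ r ∈ Set.Icc (0:ℝ) 1, M x r ≤ M x 1 := fun x r hr =>
    hM_mono x hr (Set.mem_Icc.mpr ⟨zero_le_one, le_refl 1⟩) hr.2
  have hM1sq : Integrable (fun x => M x 1 ^ 2) η := hM_env.integrable_sq
  have key_int : ∀ f : X → ℝ, Measurable f → (∀ x, 0 ≤ f x) → (∀ x, f x ≤ M x 1) →
      Integrable (fun x => M x 1 * f x) η := by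
    intro f hf h0 h1
    refine hM1sq.mono' (((hM_meas 1).mul hf).aestronglyMeasurable) ?_
    filter_upwards with x
    rw [Real.norm_eq_abs, abs_of_nonneg (mul_nonneg (env_nn x) (h0 x)), sq]
    exact mul_le_mul_of_nonneg_left (h1 x) (env_nn x)
  set h : ℝ → ℝ := fun s => ∫ x, M x 1 * M x s ∂η with hh
  have h_int : ∀ s ∈ Set.Icc (0:ℝ) 1, Integrable (fun x => M x 1 * M x s) η :=
    fun s hs => key_int _ (hM_meas s) (fun x => hM_nn x s hs) (fun x => hM_le x s hs)
  have h_mono : ∀ r ∈ Set.Icc (0:ℝ) 1, ∀ s ∈ Set.Icc (0:ℝ) 1, r ≤ s → h r ≤ h s := by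
    intro r hr s hs hrs
    exact integral_mono (h_int r hr) (h_int s hs) fun x =>
      mul_le_mul_of_nonneg_left (hM_mono x hr hs hrs) (env_nn x)
  have h_le : ∀ s ∈ Set.Icc (0:ℝ) 1, h s ≤ N ^ 2 := by
    intro s hs
    rw [hNsq]
    exact integral_mono (h_int s hs) hM1sq fun x => by
      rw [sq]; exact mul_le_mul_of_nonneg_left (hM_le x s hs) (env_nn x)
  have h_zero : h 0 = 0 := by
    simp only [hh, hM_zero, mul_zero, integral_zero]
  have hDCT : ∀ (v : ℕ → ℝ) (g : X → ℝ), (∀ n, v n ∈ Set.Icc (0:ℝ) 1) →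
      (∀ x, Tendsto (fun n => M x (v n)) atTop (𝓝 (g x))) →
      Tendsto (fun n => h (v n)) atTop (𝓝 (∫ x, M x 1 * g x ∂η)) := by
    intro v g hv hg
    refine tendsto_integral_of_dominated_convergence (fun x => M x 1 ^ 2)
      (fun n => ((hM_meas 1).mul (hM_meas (v n))).aestronglyMeasurable) hM1sq ?_ ?_
    · intro n
      filter_upwards with x
      rw [Real.norm_eq_abs, abs_of_nonneg (mul_nonneg (env_nn x) (hM_nn x _ (hv n))), sq]
      exact mul_le_mul_of_nonneg_left (hM_le x _ (hv n)) (env_nn x)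
    · filter_upwards with x
      exact (hg x).const_mul _
  have hw : Tendsto (fun n : ℕ => (1:ℝ) / (n + 1)) atTop (𝓝 0) :=
    tendsto_one_div_add_atTop_nhds_zero_nat
  have hw_pos : ∀ n : ℕ, 0 < (1:ℝ) / ((n:ℝ) + 1) := fun n => by positivity
  have hw_le : ∀ n : ℕ, (1:ℝ)/((n:ℝ)+1) ≤ 1 := by
    intro n
    rw [div_le_one (by positivity)]
    linarith [Nat.cast_nonneg (α := ℝ) n]
  have h_rc : ∀ t₀ ∈ Set.Ico (0:ℝ) 1,
      Tendsto (fun n : ℕ => h (t₀ + (1 - t₀) * (1/((n:ℝ)+1)))) atTop (𝓝 (h t₀)) := by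
    intro t₀ ht₀
    have hu_mem : ∀ n : ℕ, t₀ + (1 - t₀) * (1/((n:ℝ)+1)) ∈ Set.Icc (0:ℝ) 1 := by
      intro n
      constructor
      · have : 0 ≤ (1 - t₀) * (1/((n:ℝ)+1)) :=
          mul_nonneg (by linarith [ht₀.2]) (hw_pos n).le
        linarith [ht₀.1]
      · have : (1 - t₀) * (1/((n:ℝ)+1)) ≤ (1 - t₀) * 1 :=
          mul_le_mul_of_nonneg_left (hw_le n) (by linarith [ht₀.2])
        linarith
    have hu_t : Tendsto (fun n : ℕ => t₀ + (1 - t₀) * (1/((n:ℝ)+1))) atTop (𝓝 t₀) := by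
      have h1 := (tendsto_const_nhds (x := t₀) (f := atTop (α := ℕ))).add
        (hw.const_mul (1 - t₀))
      simpa using h1
    have hptw : ∀ x, Tendsto (fun n : ℕ => M x (t₀ + (1 - t₀) * (1/((n:ℝ)+1)))) atTop
        (𝓝 (M x t₀)) := by
      intro x
      refine (hM_rc x t₀ ht₀).tendsto.comp ?_
      rw [tendsto_nhdsWithin_iff]
      refine ⟨hu_t, Filter.Eventually.of_forall fun n => ?_⟩
      have : 0 ≤ (1 - t₀) * (1/((n:ℝ)+1)) :=
        mul_nonneg (by linarith [ht₀.2]) (hw_pos n).le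
      simp only [Set.mem_Ici]
      linarith
    exact hDCT _ (fun x => M x t₀) hu_mem hptw
  rcases le_or_gt (ε ^ 2) (15 * N ^ 2) with hcase | hcase
  · -- general construction
    set δ : ℝ := ε ^ 2 / 2 with hδ
    have hδ_pos : 0 < δ := by positivity
    set S : ℕ → Set ℝ := fun j => insert 1 {s | s ∈ Set.Icc (0:ℝ) 1 ∧ (j:ℝ) * δ < h s}
      with hS
    have hS_ne : ∀ j, (S j).Nonempty := fun j => ⟨1, Set.mem_insert _ _⟩
    have hS_sub : ∀ j, S j ⊆ Set.Icc (0:ℝ) 1 := by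
      intro j s hs
      rcases hs with rfl | hs
      · exact Set.mem_Icc.mpr ⟨zero_le_one, le_refl 1⟩
      · exact hs.1
    have hS_bdd : ∀ j, BddBelow (S j) := fun j => ⟨0, fun s hs => (hS_sub j hs).1⟩
    set t : ℕ → ℝ := fun j => if j = 0 then 0 else sInf (S j) with ht
    have ht0 : t 0 = 0 := by simp [ht]
    have ht_mem : ∀ j, t j ∈ Set.Icc (0:ℝ) 1 := by
      intro j
      rcases Nat.eq_zero_or_pos j with rfl | hj
      · rw [ht0]; exact Set.mem_Icc.mpr ⟨le_refl 0, zero_le_one⟩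
      · have hj' : j ≠ 0 := hj.ne'
        simp only [ht, if_neg hj']
        exact Set.mem_Icc.mpr ⟨le_csInf (hS_ne j) fun b hb => (hS_sub j hb).1,
          csInf_le (hS_bdd j) (Set.mem_insert _ _)⟩
    have ht_mono : ∀ j, t j ≤ t (j + 1) := by
      intro j
      rcases Nat.eq_zero_or_pos j with rfl | hj
      · rw [ht0]; exact (ht_mem 1).1
      · have hj' : j ≠ 0 := hj.ne'
        simp only [ht, if_neg hj', if_neg (Nat.succ_ne_zero j)]
        apply csInf_le_csInf (hS_bdd j) (hS_ne (j+1))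
        intro s hs
        rcases hs with rfl | hs
        · exact Set.mem_insert _ _
        · refine Set.mem_insert_iff.mpr (Or.inr ⟨hs.1, lt_of_le_of_lt ?_ hs.2⟩)
          have hc : (j:ℝ) ≤ ((j+1 : ℕ) : ℝ) := by push_cast; linarith
          exact mul_le_mul_of_nonneg_right hc hδ_pos.le
    have ht_upper : ∀ j : ℕ, ∀ r ∈ Set.Icc (0:ℝ) 1, r < t (j+1) →
        h r ≤ ((j:ℝ) + 1) * δ := by
      intro j r hr hrt
      by_contra hcon
      push_neg at hcon
      have hrS : r ∈ S (j+1) := by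
        simp only [hS, Set.mem_insert_iff, Set.mem_setOf_eq]
        exact Or.inr ⟨hr, by push_cast; linarith⟩
      have hle : t (j+1) ≤ r := by
        simp only [ht, if_neg (Nat.succ_ne_zero j)]
        exact csInf_le (hS_bdd _) hrS
      linarith
    have ht_lower : ∀ j : ℕ, t j < t (j+1) → (j:ℝ) * δ ≤ h (t j) := by
      intro j hlt
      rcases Nat.eq_zero_or_pos j with rfl | hj
      · rw [ht0, h_zero]; simp
      · have hj' : j ≠ 0 := hj.ne'
        have htj1 : t j < 1 := lt_of_lt_of_le hlt (ht_mem (j+1)).2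
        have key : ∀ u, t j < u → u ≤ 1 → (j:ℝ) * δ ≤ h u := by
          intro u hu hu1
          have hu' : sInf (S j) < u := by
            simpa only [ht, if_neg hj'] using hu
          obtain ⟨s, hsS, hsu⟩ := exists_lt_of_csInf_lt (hS_ne j) hu'
          rcases hsS with rfl | hsS
          · linarith
          · refine le_trans hsS.2.le (h_mono s hsS.1 u ⟨?_, hu1⟩ hsu.le)
            linarith [(ht_mem j).1]
        refine ge_of_tendsto (h_rc (t j) ⟨(ht_mem j).1, htj1⟩)
          (Filter.Eventually.of_forall fun n => ?_)
        apply key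
        · have h1 : 0 < (1 - t j) * (1/((n:ℝ)+1)) :=
            mul_pos (by linarith) (hw_pos n)
          linarith
        · have h2 : (1 - t j) * (1/((n:ℝ)+1)) ≤ (1 - t j) * 1 :=
            mul_le_mul_of_nonneg_left (hw_le n) (by linarith)
          linarith
    set J : ℕ := ⌈2 * N ^ 2 / ε ^ 2⌉₊ with hJdef
    have hJpos : 0 < J := Nat.ceil_pos.mpr (by positivity)
    have htJ : t J = 1 := by
      have hempty : ∀ s, s ∈ Set.Icc (0:ℝ) 1 → ¬ ((J:ℝ) * δ < h s) := by
        intro s hs hcon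
        have h1 : 2 * N ^ 2 / ε ^ 2 ≤ (J:ℝ) := Nat.le_ceil _
        rw [div_le_iff₀ (by positivity)] at h1
        have h2 : N ^ 2 ≤ (J:ℝ) * δ := by rw [hδ]; nlinarith
        linarith [h_le s hs]
      have hSJ : S J = {1} := by
        apply Set.eq_singleton_iff_unique_mem.mpr
        refine ⟨Set.mem_insert _ _, ?_⟩
        intro s hs
        rcases hs with rfl | hs
        · rfl
        · exact absurd hs.2 (hempty s hs.1)
      simp only [ht, if_neg hJpos.ne', hSJ, csInf_singleton]
    -- left limit functions
    set v : ℕ → ℕ → ℝ := fun j n => t (j+1) - t (j+1) * (1/((n:ℝ)+1)) with hv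
    have hv_le : ∀ j n, v j n ≤ t (j+1) := by
      intro j n
      have := mul_nonneg (ht_mem (j+1)).1 (hw_pos n).le
      simp only [hv]
      linarith
    have hv_mem : ∀ j n, v j n ∈ Set.Icc (0:ℝ) 1 := by
      intro j n
      refine Set.mem_Icc.mpr ⟨?_, le_trans (hv_le j n) (ht_mem (j+1)).2⟩
      simp only [hv]
      have : t (j+1) * (1/((n:ℝ)+1)) ≤ t (j+1) * 1 :=
        mul_le_mul_of_nonneg_left (hw_le n) (ht_mem (j+1)).1
      linarith [(ht_mem (j+1)).1]
    have hv_mono : ∀ j, Monotone (v j) := by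
      intro j a b hab
      simp only [hv]
      have h1 : (1:ℝ)/((b:ℝ)+1) ≤ 1/((a:ℝ)+1) := by
        apply one_div_le_one_div_of_le (by positivity)
        have : (a:ℝ) ≤ (b:ℝ) := Nat.cast_le.mpr hab
        linarith
      have h2 : t (j+1) * (1/((b:ℝ)+1)) ≤ t (j+1) * (1/((a:ℝ)+1)) :=
        mul_le_mul_of_nonneg_left h1 (ht_mem (j+1)).1
      linarith
    have hv_tendsto : ∀ j, Tendsto (v j) atTop (𝓝 (t (j+1))) := by
      intro j
      have h1 := (tendsto_const_nhds (x := t (j+1)) (f := atTop (α := ℕ))).sub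
        (hw.const_mul (t (j+1)))
      simpa [hv] using h1
    set L : ℕ → X → ℝ := fun j x => ⨆ n : ℕ, M x (v j n) with hL
    have hbdd : ∀ j x, BddAbove (Set.range fun n : ℕ => M x (v j n)) := by
      intro j x
      exact ⟨M x 1, by rintro _ ⟨n, rfl⟩; exact hM_le x _ (hv_mem j n)⟩
    have hL_tendsto : ∀ j x, Tendsto (fun n => M x (v j n)) atTop (𝓝 (L j x)) :=
      fun j x => tendsto_atTop_ciSup
        (fun a b hab => hM_mono x (hv_mem j a) (hv_mem j b) (hv_mono j hab)) (hbdd j x)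
    have hL_meas : ∀ j, Measurable (L j) := fun j =>
      measurable_of_tendsto_metrizable (fun n => hM_meas (v j n))
        (tendsto_pi_nhds.mpr fun x => hL_tendsto j x)
    have hL_le_env : ∀ j x, L j x ≤ M x 1 := fun j x =>
      ciSup_le fun n => hM_le x _ (hv_mem j n)
    have hL_nonneg : ∀ j x, 0 ≤ L j x :=
      fun j x => le_trans (hM_nn x _ (hv_mem j 0)) (le_ciSup (hbdd j x) 0)
    have hL_le_t : ∀ j x, L j x ≤ M x (t (j+1)) := fun j x =>
      ciSup_le fun n => hM_mono x (hv_mem j n) (ht_mem (j+1)) (hv_le j n)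
    have hL_ge : ∀ j x, ∀ r ∈ Set.Icc (0:ℝ) 1, r < t (j+1) → M x r ≤ L j x := by
      intro j x r hr hrt
      obtain ⟨n, hn⟩ := ((hv_tendsto j).eventually (eventually_gt_nhds hrt)).exists
      exact le_trans (hM_mono x hr (hv_mem j n) hn.le) (le_ciSup (hbdd j x) n)
    have hL_int_le : ∀ j, t j < t (j+1) → ∫ x, M x 1 * L j x ∂η ≤ ((j:ℝ)+1) * δ := by
      intro j hlt
      have hs_pos : 0 < t (j+1) := lt_of_le_of_lt (ht_mem j).1 hlt
      refine le_of_tendsto (hDCT (v j) (L j) (hv_mem j) (hL_tendsto j))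
        (Filter.Eventually.of_forall fun n => ?_)
      apply ht_upper j _ (hv_mem j n)
      have : 0 < t (j+1) * (1/((n:ℝ)+1)) := mul_pos hs_pos (hw_pos n)
      simp only [hv]
      linarith
    refine ⟨J + 1, ?_, fun i x => if (i:ℕ) < J then M x (t (i:ℕ)) else M x 1,
      fun i x => if (i:ℕ) < J then max (M x (t (i:ℕ))) (L (i:ℕ) x) else M x 1, ?_, ?_⟩
    · apply Nat.le_floor
      have h1 : (J:ℝ) < 2 * N ^ 2 / ε ^ 2 + 1 := Nat.ceil_lt_add_one (by positivity)
      rw [div_add' _ _ _ (ne_of_gt (show (0:ℝ) < ε^2 by positivity)),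
        lt_div_iff₀ (by positivity)] at h1
      push_cast
      rw [le_div_iff₀ (by positivity)]
      nlinarith
    · intro i
      have hnn : 0 ≤ ∫ x, ((if (i:ℕ) < J then max (M x (t (i:ℕ))) (L (i:ℕ) x) else M x 1)
          - (if (i:ℕ) < J then M x (t (i:ℕ)) else M x 1)) ^ 2 ∂η :=
        integral_nonneg fun x => sq_nonneg _
      have hkey : ∫ x, ((if (i:ℕ) < J then max (M x (t (i:ℕ))) (L (i:ℕ) x) else M x 1)
          - (if (i:ℕ) < J then M x (t (i:ℕ)) else M x 1)) ^ 2 ∂η ≤ δ := by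
        by_cases hiJ : (i:ℕ) < J
        · simp only [if_pos hiJ]
          rcases eq_or_lt_of_le (ht_mono (i:ℕ)) with heq | hlt
          · have hz : ∀ x, (max (M x (t (i:ℕ))) (L (i:ℕ) x) - M x (t (i:ℕ))) ^ 2 = 0 := by
              intro x
              have hle : L (i:ℕ) x ≤ M x (t (i:ℕ)) := by
                rw [heq]; exact hL_le_t (i:ℕ) x
              rw [max_eq_left hle, sub_self]
              ring
            calc ∫ x, (max (M x (t (i:ℕ))) (L (i:ℕ) x) - M x (t (i:ℕ))) ^ 2 ∂η
                = ∫ x, (0:ℝ) ∂η := by congr 1; funext x; rw [hz x]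
              _ = 0 := integral_zero _ _
              _ ≤ δ := hδ_pos.le
          · have hge : ∀ x, M x (t (i:ℕ)) ≤ L (i:ℕ) x := fun x =>
              hL_ge (i:ℕ) x (t (i:ℕ)) (ht_mem (i:ℕ)) hlt
            have hd_nn : ∀ x, 0 ≤ L (i:ℕ) x - M x (t (i:ℕ)) := fun x =>
              sub_nonneg.mpr (hge x)
            have hd_le : ∀ x, L (i:ℕ) x - M x (t (i:ℕ)) ≤ M x 1 := by
              intro x
              have := hM_nn x (t (i:ℕ)) (ht_mem (i:ℕ))
              linarith [hL_le_env (i:ℕ) x]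
            have hint1 : Integrable (fun x => (L (i:ℕ) x - M x (t (i:ℕ))) ^ 2) η := by
              refine hM1sq.mono'
                (((hL_meas (i:ℕ)).sub (hM_meas (t (i:ℕ)))).pow_const 2).aestronglyMeasurable ?_
              filter_upwards with x
              rw [Real.norm_eq_abs, abs_of_nonneg (sq_nonneg _)]
              exact pow_le_pow_left₀ (hd_nn x) (hd_le x) 2
            have hint2 : Integrable (fun x => M x 1 * L (i:ℕ) x) η :=
              key_int _ (hL_meas (i:ℕ)) (hL_nonneg (i:ℕ)) (hL_le_env (i:ℕ))
            have hint3 : Integrable (fun x => M x 1 * M x (t (i:ℕ))) η :=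
              h_int _ (ht_mem (i:ℕ))
            have hptw : ∀ x, (L (i:ℕ) x - M x (t (i:ℕ))) ^ 2
                ≤ M x 1 * L (i:ℕ) x - M x 1 * M x (t (i:ℕ)) := by
              intro x
              have h1 : (L (i:ℕ) x - M x (t (i:ℕ))) ^ 2
                  ≤ M x 1 * (L (i:ℕ) x - M x (t (i:ℕ))) := by
                rw [sq]
                exact mul_le_mul_of_nonneg_right (hd_le x) (hd_nn x)
              nlinarith [h1]
            calc ∫ x, (max (M x (t (i:ℕ))) (L (i:ℕ) x) - M x (t (i:ℕ))) ^ 2 ∂η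
                = ∫ x, (L (i:ℕ) x - M x (t (i:ℕ))) ^ 2 ∂η := by
                  congr 1; funext x; rw [max_eq_right (hge x)]
              _ ≤ ∫ x, (M x 1 * L (i:ℕ) x - M x 1 * M x (t (i:ℕ))) ∂η :=
                  integral_mono hint1 (hint2.sub hint3) hptw
              _ = (∫ x, M x 1 * L (i:ℕ) x ∂η) - h (t (i:ℕ)) := integral_sub hint2 hint3
              _ ≤ (((i:ℕ):ℝ)+1) * δ - ((i:ℕ):ℝ) * δ :=
                  sub_le_sub (hL_int_le (i:ℕ) hlt) (ht_lower (i:ℕ) hlt)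
              _ = δ := by ring
        · simp only [if_neg hiJ, sub_self]
          calc ∫ x, ((0:ℝ)) ^ 2 ∂η = 0 := by simp
            _ ≤ δ := hδ_pos.le
      calc (∫ x, ((if (i:ℕ) < J then max (M x (t (i:ℕ))) (L (i:ℕ) x) else M x 1)
              - (if (i:ℕ) < J then M x (t (i:ℕ)) else M x 1)) ^ 2 ∂η) ^ (1/2 : ℝ)
          ≤ δ ^ (1/2 : ℝ) := Real.rpow_le_rpow hnn hkey (by norm_num)
        _ < (ε ^ 2) ^ (1/2 : ℝ) := by
            apply Real.rpow_lt_rpow hδ_pos.le _ (by norm_num)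
            rw [hδ]
            have : 0 < ε ^ 2 := by positivity
            linarith
        _ = ε := by
            rw [← Real.rpow_natCast ε 2, ← Real.rpow_mul hε.le]
            norm_num
    · intro r hr
      by_cases hr1 : r = 1
      · subst hr1
        refine ⟨⟨J, Nat.lt_succ_self J⟩, ?_, ?_⟩ <;> intro x <;>
          simp only [if_neg (lt_irrefl J)] <;> exact le_refl _
      · have hrlt : r < 1 := lt_of_le_of_ne hr.2 hr1
        have hex : ∃ j, r < t j := ⟨J, by rwa [htJ]⟩
        have hspec : r < t (Nat.find hex) := Nat.find_spec hex
        have hn0 : Nat.find hex ≠ 0 := by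
          intro h0
          rw [h0, ht0] at hspec
          linarith [hr.1]
        have hnJ : Nat.find hex ≤ J := Nat.find_le (by rwa [htJ])
        obtain ⟨j, hjn⟩ : ∃ j, Nat.find hex = j + 1 :=
          ⟨Nat.find hex - 1, (Nat.succ_pred_eq_of_ne_zero hn0).symm⟩
        have hjr : t j ≤ r := by
          by_contra hcon
          push_neg at hcon
          exact (Nat.find_min hex (by omega)) hcon
        have hjJ : j < J := by omega
        rw [hjn] at hspec
        refine ⟨⟨j, by omega⟩, ?_, ?_⟩
        · intro x
          simp only [if_pos hjJ]
          exact hM_mono x (ht_mem j) hr hjr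
        · intro x
          simp only [if_pos hjJ]
          exact le_trans (hL_ge j x r hr hspec) (le_max_right _ _)
  · -- single bracket case
    refine ⟨1, ?_, fun _ _ => 0, fun _ x => M x 1, ?_, ?_⟩
    · apply Nat.le_floor
      rw [Nat.cast_one, le_div_iff₀ (by positivity)]
      nlinarith
    · intro i
      simp only [sub_zero]
      rw [← hN]
      nlinarith
    · intro r hr
      exact ⟨0, fun x => hM_nn x r hr, fun x => hM_le x r hr⟩
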